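/- arXiv:2207.08999 — 4 statements merged into one kernel-verified Lean document; each statement's English description precedes it below -/
import Mathlib

section
/- Let α1, α2, β1, β2, γ, κ, λ be real numbers with α1 > 0, α2 > 0, γ > 0, κ > 0, λ ∈ (0,1), β1 > β2 > 0, set ρ = α2/(α1 + α2) and B = ρ·β1 + (1-ρ)·β2. Define the 3×3 real matrices T with first row entries all equal to (1-λ)·β1·ρ, second row entries all equal to (1-λ)·β2·(1-ρ), third row entries all equal to λ·B, and Σ = !![-(α1+γ+κ), α2, 0; α1, -(α2+γ+κ), 0; γ, γ, -κ]. Then Σ is invertible and the characteristic polynomial of the next generation matrix K = -T·Σ⁻¹ is X²·(X - B/κ); in particular the eigenvalues of K are 0 (with multiplicity two) and B/κ, so the basic reproduction number of system (MB) is R0 = (ρ·β1 + (1-ρ)·β2)/κ. -/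
set_option maxHeartbeats 2000000


open Matrix Polynomial

lemma charpoly_rank_one_aux (x y z : ℝ) :
    (!![x,x,x;y,y,y;z,z,z] : Matrix (Fin 3) (Fin 3) ℝ).charpoly
      = X^2 * (X - C (x+y+z)) := by
  rw [Matrix.charpoly, Matrix.det_fin_three]
  simp [Matrix.charmatrix_apply_eq, Matrix.charmatrix_apply_ne, map_add]
  ring

theorem NGM_charpoly_MB (a1 a2 b1 b2 gam kap lam : ℝ)
    (ha1 : 0 < a1) (ha2 : 0 < a2)
    (hgam : 0 < gam) (hkap : 0 < kap)
    (hlam0 : 0 < lam) (hlam1 : lam < 1)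
    (hb2 : 0 < b2) (hb : b2 < b1)
    (rho B : ℝ) (hrho : rho = a2 / (a1 + a2)) (hB : B = rho * b1 + (1 - rho) * b2) :
    IsUnit (!![-(a1 + gam + kap), a2, 0;
               a1, -(a2 + gam + kap), 0;
               gam, gam, -kap] : Matrix (Fin 3) (Fin 3) ℝ) ∧
    (-(!![(1 - lam) * b1 * rho, (1 - lam) * b1 * rho, (1 - lam) * b1 * rho;
          (1 - lam) * b2 * (1 - rho), (1 - lam) * b2 * (1 - rho), (1 - lam) * b2 * (1 - rho);
          lam * B, lam * B, lam * B] : Matrix (Fin 3) (Fin 3) ℝ) *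
        (!![-(a1 + gam + kap), a2, 0;
            a1, -(a2 + gam + kap), 0;
            gam, gam, -kap] : Matrix (Fin 3) (Fin 3) ℝ)⁻¹).charpoly
      = X ^ 2 * (X - C (B / kap)) := by
  set S : Matrix (Fin 3) (Fin 3) ℝ :=
    !![-(a1 + gam + kap), a2, 0;
       a1, -(a2 + gam + kap), 0;
       gam, gam, -kap] with hS
  have hd : (gam + kap) * (a1 + a2 + gam + kap) ≠ 0 := by positivity
  have hdet : S.det = -(kap * ((gam + kap) * (a1 + a2 + gam + kap))) := by
    rw [hS, Matrix.det_fin_three]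
    simp
    ring
  have hU : IsUnit S := by
    rw [Matrix.isUnit_iff_isUnit_det, hdet, isUnit_iff_ne_zero]
    intro h
    have : kap * ((gam + kap) * (a1 + a2 + gam + kap)) > 0 := by positivity
    linarith [neg_eq_zero.mp h]
  refine ⟨hU, ?_⟩
  set d : ℝ := (gam + kap) * (a1 + a2 + gam + kap) with hdd
  set N : Matrix (Fin 3) (Fin 3) ℝ :=
    !![-(a2 + gam + kap) / d, -a2 / d, 0;
       -a1 / d, -(a1 + gam + kap) / d, 0;
       -gam / (kap * (gam + kap)), -gam / (kap * (gam + kap)), -(1 / kap)] with hN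
  have hinv : S⁻¹ = N := by
    apply Matrix.inv_eq_right_inv
    ext i j
    fin_cases i <;> fin_cases j <;>
      simp [hS, hN, Matrix.mul_apply, Fin.sum_univ_three] <;>
      field_simp <;> ring
  rw [hinv]
  have hK : (-(!![(1 - lam) * b1 * rho, (1 - lam) * b1 * rho, (1 - lam) * b1 * rho;
          (1 - lam) * b2 * (1 - rho), (1 - lam) * b2 * (1 - rho), (1 - lam) * b2 * (1 - rho);
          lam * B, lam * B, lam * B] : Matrix (Fin 3) (Fin 3) ℝ) * N)
      = !![(1 - lam) * b1 * rho / kap, (1 - lam) * b1 * rho / kap, (1 - lam) * b1 * rho / kap;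
           (1 - lam) * b2 * (1 - rho) / kap, (1 - lam) * b2 * (1 - rho) / kap, (1 - lam) * b2 * (1 - rho) / kap;
           lam * B / kap, lam * B / kap, lam * B / kap] := by
    ext i j
    fin_cases i <;> fin_cases j <;>
      simp [hN, Matrix.mul_apply, Fin.sum_univ_three, hdd] <;>
      field_simp <;> ring
  rw [hK, charpoly_rank_one_aux]
  congr 2
  field_simp
  rw [hB]
  ring
end

section
/- Let β1, β2, ρ be real numbers with 0 < β2 < β1 and ρ ∈ (0,1), and set B = ρ·β1 + (1-ρ)·β2, Υα1 = -ρ·(1-ρ)·(β1-β2)/B, Υα2 = ρ·(1-ρ)·(β1-β2)/B, and Υρ = 1 - β2/B. Then Υα1 < Υα2 < Υρ; in particular Υα1 < 0 so R0 is always least sensitive to α1. -/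
theorem sensitivity_alpha_order (b1 b2 rho : ℝ)
    (hb2 : 0 < b2) (hb2b1 : b2 < b1) (hrho0 : 0 < rho) (hrho1 : rho < 1) :
    (-(rho * (1 - rho) * (b1 - b2)) / (rho * b1 + (1 - rho) * b2) <
      rho * (1 - rho) * (b1 - b2) / (rho * b1 + (1 - rho) * b2) ∧
     rho * (1 - rho) * (b1 - b2) / (rho * b1 + (1 - rho) * b2) <
      1 - b2 / (rho * b1 + (1 - rho) * b2)) ∧
    -(rho * (1 - rho) * (b1 - b2)) / (rho * b1 + (1 - rho) * b2) < 0 := by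
  have hB : 0 < rho * b1 + (1 - rho) * b2 := by nlinarith
  have hx : 0 < rho * (1 - rho) * (b1 - b2) := mul_pos (mul_pos hrho0 (by linarith)) (by linarith)
  have h1 : -(rho * (1 - rho) * (b1 - b2)) / (rho * b1 + (1 - rho) * b2) <
      rho * (1 - rho) * (b1 - b2) / (rho * b1 + (1 - rho) * b2) :=
    div_lt_div_of_pos_right (by linarith) hB
  have h2 : rho * (1 - rho) * (b1 - b2) / (rho * b1 + (1 - rho) * b2) <
      1 - b2 / (rho * b1 + (1 - rho) * b2) := by
    rw [div_lt_iff₀ hB, sub_mul, div_mul_cancel₀ _ (ne_of_gt hB)]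
    nlinarith
  have h3 : -(rho * (1 - rho) * (b1 - b2)) / (rho * b1 + (1 - rho) * b2) < 0 :=
    div_neg_of_neg_of_pos (by linarith) hB
  exact ⟨⟨h1, h2⟩, h3⟩
end

section
/- Let β1, β2, ρ be real numbers with 0 < β2 < β1 and ρ ∈ (0,1), and set B = ρ·β1 + (1-ρ)·β2, Υα1 = -ρ·(1-ρ)·(β1-β2)/B, Υα2 = ρ·(1-ρ)·(β1-β2)/B, Υρ = 1 - β2/B, Υβ1 = 1 - (1-ρ)·β2/B, and Υβ2 = 1 - ρ·β1/B. If β2/β1 < ρ < β2/(β1 - β2), then Υα1 < Υα2 < Υβ2 < Υρ < Υβ1. -/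
theorem sensitivity_order_MB_case_c (b1 b2 rho : ℝ)
    (hb2 : 0 < b2) (hb2b1 : b2 < b1) (hrho0 : 0 < rho) (hrho1 : rho < 1)
    (h1 : b2 / b1 < rho) (h2 : rho < b2 / (b1 - b2)) :
    -(rho * (1 - rho) * (b1 - b2)) / (rho * b1 + (1 - rho) * b2) <
      rho * (1 - rho) * (b1 - b2) / (rho * b1 + (1 - rho) * b2) ∧
    rho * (1 - rho) * (b1 - b2) / (rho * b1 + (1 - rho) * b2) <
      1 - rho * b1 / (rho * b1 + (1 - rho) * b2) ∧
    1 - rho * b1 / (rho * b1 + (1 - rho) * b2) <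
      1 - b2 / (rho * b1 + (1 - rho) * b2) ∧
    1 - b2 / (rho * b1 + (1 - rho) * b2) <
      1 - (1 - rho) * b2 / (rho * b1 + (1 - rho) * b2) := by
  have hB : 0 < rho * b1 + (1 - rho) * b2 := by nlinarith
  have h1' : b2 < rho * b1 := (div_lt_iff₀ (by linarith)).mp h1
  have h2' : rho * (b1 - b2) < b2 := (lt_div_iff₀ (by linarith)).mp h2
  have e1 : 1 - rho * b1 / (rho * b1 + (1 - rho) * b2)
      = (1 - rho) * b2 / (rho * b1 + (1 - rho) * b2) := by
    field_simp; ring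
  have e2 : 1 - b2 / (rho * b1 + (1 - rho) * b2)
      = (rho * b1 - rho * b2) / (rho * b1 + (1 - rho) * b2) := by
    rw [eq_div_iff hB.ne', sub_mul, div_mul_cancel₀ _ hB.ne']; ring
  have e3 : 1 - (1 - rho) * b2 / (rho * b1 + (1 - rho) * b2)
      = rho * b1 / (rho * b1 + (1 - rho) * b2) := by
    field_simp; ring
  refine ⟨?_, ?_, ?_, ?_⟩
  · rw [div_lt_div_iff₀ hB hB]
    nlinarith [mul_pos (mul_pos (mul_pos hrho0 (show (0:ℝ) < 1 - rho by linarith)) (show (0:ℝ) < b1 - b2 by linarith)) hB]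
  · rw [e1, div_lt_div_iff₀ hB hB]
    nlinarith [mul_pos (mul_pos (show (0:ℝ) < 1 - rho by linarith) (show (0:ℝ) < b2 - rho * (b1 - b2) by linarith)) hB]
  · rw [e1, e2, div_lt_div_iff₀ hB hB]; nlinarith
  · rw [e2, e3, div_lt_div_iff₀ hB hB]; nlinarith
end

section
/- Let β1, β2, ρ be real numbers with 0 < β2 < β1 and ρ ∈ (0,1), and set B = ρ·β1 + (1-ρ)·β2, Υα1 = -ρ·(1-ρ)·(β1-β2)/B, Υα2 = ρ·(1-ρ)·(β1-β2)/B, Υρ = 1 - β2/B, Υβ1 = 1 - (1-ρ)·β2/B, and Υβ2 = 1 - ρ·β1/B. If ρ > β2/(β1 - β2), then Υα1 < Υβ2 < Υα2 < Υρ < Υβ1. -/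
theorem sensitivity_order_MB_case_d (b1 b2 rho : ℝ)
    (hb2 : 0 < b2) (hb2b1 : b2 < b1) (hrho0 : 0 < rho) (hrho1 : rho < 1)
    (h : b2 / (b1 - b2) < rho) :
    -(rho * (1 - rho) * (b1 - b2)) / (rho * b1 + (1 - rho) * b2) <
      1 - rho * b1 / (rho * b1 + (1 - rho) * b2) ∧
    1 - rho * b1 / (rho * b1 + (1 - rho) * b2) <
      rho * (1 - rho) * (b1 - b2) / (rho * b1 + (1 - rho) * b2) ∧
    rho * (1 - rho) * (b1 - b2) / (rho * b1 + (1 - rho) * b2) <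
      1 - b2 / (rho * b1 + (1 - rho) * b2) ∧
    1 - b2 / (rho * b1 + (1 - rho) * b2) <
      1 - (1 - rho) * b2 / (rho * b1 + (1 - rho) * b2) := by
  have hB : 0 < rho * b1 + (1 - rho) * b2 := by nlinarith
  have hk : b2 < rho * (b1 - b2) := (div_lt_iff₀ (by linarith)).mp h
  refine ⟨?_, ?_, ?_, ?_⟩
  · rw [div_lt_iff₀ hB, sub_mul, div_mul_cancel₀ _ hB.ne']; nlinarith
  · rw [lt_div_iff₀ hB, sub_mul, div_mul_cancel₀ _ hB.ne']; nlinarith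
  · rw [div_lt_iff₀ hB, sub_mul, div_mul_cancel₀ _ hB.ne']; nlinarith
  · rw [sub_lt_sub_iff_left, div_lt_div_iff_of_pos_right hB]; nlinarith
end
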